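/- For any w > 0, the range of the function h_w(x,y) = y/√(1+w²x²) + x² + y² on ℝ² is the interval [−1/4, ∞). -/
import Mathlib


open Real

/-- The range of `h_w(x,y) = y/√(1+w²x²) + x² + y²` is `[−1/4, ∞)`. -/
theorem hw_range (w : ℝ) (hw : 0 < w) :
    Set.range (fun p : ℝ × ℝ =>
        p.2 / Real.sqrt (1 + w ^ 2 * p.1 ^ 2) + p.1 ^ 2 + p.2 ^ 2)
      = Set.Ici (-(1 / 4) : ℝ) := by
  ext z
  simp only [Set.mem_range, Set.mem_Ici]
  constructor
  · rintro ⟨⟨x, y⟩, rfl⟩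
    simp only
    have h1 : (1 : ℝ) ≤ 1 + w ^ 2 * x ^ 2 := by nlinarith [sq_nonneg (w * x)]
    have hs : (1 : ℝ) ≤ Real.sqrt (1 + w ^ 2 * x ^ 2) := by
      have := Real.sqrt_le_sqrt h1
      rwa [Real.sqrt_one] at this
    have hs0 : 0 < Real.sqrt (1 + w ^ 2 * x ^ 2) := lt_of_lt_of_le one_pos hs
    have key : -|y| ≤ y / Real.sqrt (1 + w ^ 2 * x ^ 2) := by
      have : |y / Real.sqrt (1 + w ^ 2 * x ^ 2)| ≤ |y| := by
        rw [abs_div, abs_of_pos hs0]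
        calc |y| / Real.sqrt (1 + w ^ 2 * x ^ 2) ≤ |y| / 1 :=
              div_le_div_of_nonneg_left (abs_nonneg y) one_pos hs
          _ = |y| := by ring
      linarith [neg_abs_le (y / Real.sqrt (1 + w ^ 2 * x ^ 2))]
    nlinarith [sq_nonneg (|y| - 1/2), sq_nonneg x, sq_abs y]
  · intro hz
    have h1 : (0:ℝ) ≤ z + 1/4 := by linarith
    refine ⟨(0, -1/2 + Real.sqrt (z + 1/4)), ?_⟩
    have hsq : Real.sqrt (z + 1/4) ^ 2 = z + 1/4 := Real.sq_sqrt h1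
    simp only [mul_zero, ne_eq]
    rw [show w ^ 2 * 0 ^ 2 = 0 by ring, add_zero, Real.sqrt_one]
    nlinarith [hsq]
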